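/- Suppose z = (z₀, z₁) ∈ K_{+1}(z̲) with ‖z₁‖ > z̄ - z₀ and ‖z₁‖ > z₀ - z̄, and z̲ ≤ z̄. Then the point w = ((z̄ - z₀ + ‖z₁‖)/2)·(-1, z₁/‖z₁‖) + (z̄, 0) belongs to K_{+1}(z̲). -/
import Mathlib


def shiftedSOC (d : ℕ) (α c : ℝ) : Set (ℝ × EuclideanSpace ℝ (Fin d)) :=
  {z | ‖z.2‖ ≤ α * (z.1 - c)}

theorem case3_point_mem_Kplus (d : ℕ) (zub zlb : ℝ) (h : zlb ≤ zub)
    (z : ℝ × EuclideanSpace ℝ (Fin d)) (hz : z ∈ shiftedSOC d 1 zlb)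
    (h1 : zub - z.1 < ‖z.2‖) (h2 : z.1 - zub < ‖z.2‖) :
    ((zub - z.1 + ‖z.2‖) / 2) •
        (((-1 : ℝ), ‖z.2‖⁻¹ • z.2) : ℝ × EuclideanSpace ℝ (Fin d)) +
      ((zub, (0 : EuclideanSpace ℝ (Fin d))) : ℝ × EuclideanSpace ℝ (Fin d)) ∈
      shiftedSOC d 1 zlb := by
  have hzpos : 0 < ‖z.2‖ := by linarith
  have ht : 0 ≤ (zub - z.1 + ‖z.2‖) / 2 := by linarith
  have hz' : ‖z.2‖ ≤ z.1 - zlb := by simpa [shiftedSOC, one_mul] using hz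
  simp only [shiftedSOC, Set.mem_setOf_eq, Prod.fst_add, Prod.snd_add, Prod.smul_mk,
    smul_eq_mul]
  have hnorm : ‖((zub - z.1 + ‖z.2‖) / 2) • (‖z.2‖⁻¹ • z.2) + (0 : EuclideanSpace ℝ (Fin d))‖
      = (zub - z.1 + ‖z.2‖) / 2 := by
    rw [add_zero, norm_smul, norm_smul, norm_inv, norm_norm,
      inv_mul_cancel₀ hzpos.ne', mul_one, Real.norm_of_nonneg ht]
  rw [hnorm]
  have : ((zub - z.1 + ‖z.2‖) / 2) * (-1) + zub - zlb
      = zub - zlb - (zub - z.1 + ‖z.2‖) / 2 := by ring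
  nlinarith
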